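/- Let d ≥ 1, m > 0, and let F be a Schwartz function on (ℝ⁴)^d. Then the function ℝ^{3d} → ℂ given by (𝐤₁,…,𝐤_d) ↦ F( (ω(𝐤₁),𝐤₁), …, (ω(𝐤_d),𝐤_d) ), where ω(𝐤) = √(|𝐤|² + m²), is a Schwartz function on ℝ^{3d}. -/

import Mathlib

open scoped BigOperators

section combinators

variable {E F G : Type*} [NormedAddCommGroup E] [NormedSpace ℝ E]
  [NormedAddCommGroup F] [NormedSpace ℝ F] [NormedAddCommGroup G] [NormedSpace ℝ G]

lemma tg_comp_clm {g : F → G} (hg : Function.HasTemperateGrowth g) (L : E →L[ℝ] F) :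
    Function.HasTemperateGrowth (g ∘ L) := by
  refine ⟨hg.1.comp L.contDiff, fun n => ?_⟩
  obtain ⟨k, C, hC0, hb⟩ := hg.norm_iteratedFDeriv_le_uniform n
  refine ⟨k, C * ‖L‖ ^ n * (1 + ‖L‖) ^ k, fun x => ?_⟩
  rw [L.iteratedFDeriv_comp_right hg.1 x (mod_cast le_top)]
  have h1 : 1 + ‖L x‖ ≤ (1 + ‖L‖) * (1 + ‖x‖) := by
    have := L.le_opNorm x
    nlinarith [norm_nonneg L, norm_nonneg x]
  calc ‖(iteratedFDeriv ℝ n g (L x)).compContinuousLinearMap fun _ => L‖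
      ≤ ‖iteratedFDeriv ℝ n g (L x)‖ * ∏ _i : Fin n, ‖L‖ :=
        (iteratedFDeriv ℝ n g (L x)).norm_compContinuousLinearMap_le _
    _ = ‖iteratedFDeriv ℝ n g (L x)‖ * ‖L‖ ^ n := by
        simp [Finset.prod_const, Finset.card_univ]
    _ ≤ (C * (1 + ‖L x‖) ^ k) * ‖L‖ ^ n := by
        gcongr
        exact hb n le_rfl (L x)
    _ ≤ (C * ((1 + ‖L‖) * (1 + ‖x‖)) ^ k) * ‖L‖ ^ n :=
        mul_le_mul_of_nonneg_right
          (mul_le_mul_of_nonneg_left (pow_le_pow_left₀ (by positivity) h1 k) hC0)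
          (by positivity)
    _ = C * ‖L‖ ^ n * (1 + ‖L‖) ^ k * (1 + ‖x‖) ^ k := by
        rw [mul_pow]; ring

lemma tg_clm_comp (L : F →L[ℝ] G) {f : E → F} (hf : Function.HasTemperateGrowth f) :
    Function.HasTemperateGrowth (fun x => L (f x)) := by
  refine ⟨L.contDiff.comp hf.1, fun n => ?_⟩
  obtain ⟨k, C, hC0, hb⟩ := hf.norm_iteratedFDeriv_le_uniform n
  refine ⟨k, ‖L‖ * C, fun x => ?_⟩
  have he : (fun x => L (f x)) = ⇑L ∘ f := rfl
  rw [he, L.iteratedFDeriv_comp_left hf.1.contDiffAt (x := x) (mod_cast le_top)]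
  calc ‖L.compContinuousMultilinearMap (iteratedFDeriv ℝ n f x)‖
      ≤ ‖L‖ * ‖iteratedFDeriv ℝ n f x‖ := L.norm_compContinuousMultilinearMap_le _
    _ ≤ ‖L‖ * (C * (1 + ‖x‖) ^ k) := by gcongr; exact hb n le_rfl x
    _ = ‖L‖ * C * (1 + ‖x‖) ^ k := by ring

lemma tg_add {f g : E → F} (hf : Function.HasTemperateGrowth f)
    (hg : Function.HasTemperateGrowth g) :
    Function.HasTemperateGrowth (fun x => f x + g x) := by
  refine ⟨hf.1.add hg.1, fun n => ?_⟩
  obtain ⟨k₁, C₁, hC₁, hb₁⟩ := hf.norm_iteratedFDeriv_le_uniform n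
  obtain ⟨k₂, C₂, hC₂, hb₂⟩ := hg.norm_iteratedFDeriv_le_uniform n
  refine ⟨max k₁ k₂, C₁ + C₂, fun x => ?_⟩
  have he : (fun x => f x + g x) = f + g := rfl
  have hx : (0:ℝ) ≤ ‖x‖ := norm_nonneg x
  rw [he, iteratedFDeriv_add_apply (hf.1.of_le (mod_cast le_top)).contDiffAt
    (hg.1.of_le (mod_cast le_top)).contDiffAt]
  calc ‖iteratedFDeriv ℝ n f x + iteratedFDeriv ℝ n g x‖
      ≤ ‖iteratedFDeriv ℝ n f x‖ + ‖iteratedFDeriv ℝ n g x‖ := norm_add_le _ _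
    _ ≤ C₁ * (1 + ‖x‖) ^ k₁ + C₂ * (1 + ‖x‖) ^ k₂ :=
        add_le_add (hb₁ n le_rfl x) (hb₂ n le_rfl x)
    _ ≤ C₁ * (1 + ‖x‖) ^ max k₁ k₂ + C₂ * (1 + ‖x‖) ^ max k₁ k₂ := by
        gcongr <;> first
          | linarith
          | exact le_max_left _ _
          | exact le_max_right _ _
    _ = (C₁ + C₂) * (1 + ‖x‖) ^ max k₁ k₂ := by ring

lemma tg_sum {ι : Type*} (s : Finset ι) (f : ι → E → F)
    (h : ∀ i ∈ s, Function.HasTemperateGrowth (f i)) :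
    Function.HasTemperateGrowth (fun x => ∑ i ∈ s, f i x) := by
  classical
  induction s using Finset.cons_induction with
  | empty => simpa using Function.HasTemperateGrowth.zero
  | cons a s ha ih =>
    simp only [Finset.sum_cons]
    exact tg_add (h a (Finset.mem_cons_self a s))
      (ih fun i hi => h i (Finset.mem_cons_of_mem hi))



/-- Relativistic energy `ω(𝐤) = √(|𝐤|² + m²)`. -/
noncomputable def omegaM (m : ℝ) (k : Fin 3 → ℝ) : ℝ :=
  Real.sqrt ((∑ i, k i ^ 2) + m ^ 2)

/-- The mass-shell point `k̃ = (ω(𝐤), 𝐤) ∈ ℝ⁴`. -/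
noncomputable def massShell (m : ℝ) (k : Fin 3 → ℝ) : Fin 4 → ℝ :=
  Fin.cons (omegaM m k) k

lemma sqrt_iteratedDeriv (m : ℝ) (hm : 0 < m) (n : ℕ) :
    ∃ c : ℝ, ∀ y : ℝ, -(m^2/2) < y →
      iteratedDeriv n (fun t : ℝ => Real.sqrt (t + m^2)) y = c * (y + m^2) ^ ((1:ℝ)/2 - n) := by
  induction n with
  | zero =>
    refine ⟨1, fun y hy => ?_⟩
    simp [iteratedDeriv_zero, Real.sqrt_eq_rpow]
  | succ n ih =>
    obtain ⟨c, hc⟩ := ih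
    refine ⟨c * ((1:ℝ)/2 - n), fun y hy => ?_⟩
    have hpos : 0 < y + m^2 := by nlinarith
    have hev : (iteratedDeriv n (fun t : ℝ => Real.sqrt (t + m^2)))
        =ᶠ[nhds y] (fun z => c * (z + m^2) ^ ((1:ℝ)/2 - n)) := by
      filter_upwards [isOpen_Ioi.mem_nhds (show y ∈ Set.Ioi (-(m^2/2)) from hy)] with z hz
      exact hc z hz
    rw [iteratedDeriv_succ, hev.deriv_eq]
    have hd : HasDerivAt (fun z : ℝ => c * (z + m^2) ^ ((1:ℝ)/2 - n))
        (c * (1 * ((1:ℝ)/2 - n) * (y + m^2) ^ ((1:ℝ)/2 - n - 1))) y := by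
      exact (((hasDerivAt_id y).add_const (m^2)).rpow_const (Or.inl (ne_of_gt hpos))).const_mul c
    rw [hd.deriv]
    have : (1:ℝ)/2 - n - 1 = (1:ℝ)/2 - (n+1 : ℕ) := by push_cast; ring
    rw [this]; ring

lemma q_hasFDerivAt (x : Fin 3 → ℝ) :
    HasFDerivAt (fun k : Fin 3 → ℝ => ∑ i, k i ^ 2)
      (∑ i : Fin 3, (2 * x i) • ContinuousLinearMap.proj (R := ℝ) (φ := fun _ : Fin 3 => ℝ) i) x := by
  have h : ∀ i : Fin 3, HasFDerivAt (fun k : Fin 3 → ℝ => k i ^ 2)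
      ((2 * x i) • ContinuousLinearMap.proj (R := ℝ) (φ := fun _ : Fin 3 => ℝ) i) x := by
    intro i
    have h2 := ((ContinuousLinearMap.proj (R := ℝ) (φ := fun _ : Fin 3 => ℝ) i).hasFDerivAt
      (x := x)).mul ((ContinuousLinearMap.proj (R := ℝ) (φ := fun _ : Fin 3 => ℝ) i).hasFDerivAt
      (x := x))
    have he : (fun k : Fin 3 → ℝ => k i ^ 2) = fun k : Fin 3 → ℝ => k i * k i := by
      funext k; ring
    have heq : (2 * x i) • ContinuousLinearMap.proj (R := ℝ) (φ := fun _ : Fin 3 => ℝ) i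
        = (ContinuousLinearMap.proj (R := ℝ) (φ := fun _ : Fin 3 => ℝ) i) x •
            ContinuousLinearMap.proj (R := ℝ) (φ := fun _ : Fin 3 => ℝ) i +
          (ContinuousLinearMap.proj (R := ℝ) (φ := fun _ : Fin 3 => ℝ) i) x •
            ContinuousLinearMap.proj (R := ℝ) (φ := fun _ : Fin 3 => ℝ) i := by
      ext v; simp; ring
    rw [he, heq]
    exact h2
  simpa using HasFDerivAt.fun_sum (fun i _ => h i)

lemma q_tg : Function.HasTemperateGrowth (fun k : Fin 3 → ℝ => ∑ i, k i ^ 2) := by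
  have hB : Function.HasTemperateGrowth
      (fderiv ℝ (fun k : Fin 3 → ℝ => ∑ i, k i ^ 2)) := by
    have : (fderiv ℝ (fun k : Fin 3 → ℝ => ∑ i, k i ^ 2)) =
        fun x => (∑ i : Fin 3, ((ContinuousLinearMap.proj (R := ℝ) (φ := fun _ : Fin 3 => ℝ) i).smulRight
          ((2:ℝ) • ContinuousLinearMap.proj (R := ℝ) (φ := fun _ : Fin 3 => ℝ) i)) : _ →L[ℝ] _) x := by
      funext x
      rw [(q_hasFDerivAt x).fderiv]
      ext v
      simp [ContinuousLinearMap.smulRight_apply]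
      exact Finset.sum_congr rfl fun _ _ => by ring
    rw [this]
    exact ContinuousLinearMap.hasTemperateGrowth _
  refine Function.HasTemperateGrowth.of_fderiv hB
    (fun x => (q_hasFDerivAt x).differentiableAt) (k := 2) (C := 3) (fun x => ?_)
  have h1 : ∀ i : Fin 3, x i ^ 2 ≤ ‖x‖ ^ 2 := by
    intro i
    have h0 : |x i| ≤ ‖x‖ := by simpa [Real.norm_eq_abs] using norm_le_pi_norm x i
    have := pow_le_pow_left₀ (abs_nonneg (x i)) h0 2
    simpa [sq_abs] using this
  have h2 : (∑ i, x i ^ 2) ≤ 3 * ‖x‖ ^ 2 := by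
    calc (∑ i : Fin 3, x i ^ 2) ≤ ∑ _i : Fin 3, ‖x‖ ^ 2 := Finset.sum_le_sum fun i _ => h1 i
    _ = 3 * ‖x‖ ^ 2 := by simp [Finset.sum_const, Finset.card_univ]
  have h3 : 0 ≤ ∑ i, x i ^ 2 := Finset.sum_nonneg fun i _ => sq_nonneg _
  rw [Real.norm_eq_abs, abs_of_nonneg h3]
  nlinarith [norm_nonneg x]


lemma q_nonneg (x : Fin 3 → ℝ) : 0 ≤ ∑ i, x i ^ 2 :=
  Finset.sum_nonneg fun i _ => sq_nonneg _

lemma q_le (x : Fin 3 → ℝ) : (∑ i, x i ^ 2) ≤ 3 * ‖x‖ ^ 2 := by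
  have h1 : ∀ i : Fin 3, x i ^ 2 ≤ ‖x‖ ^ 2 := by
    intro i
    have h0 : |x i| ≤ ‖x‖ := by simpa [Real.norm_eq_abs] using norm_le_pi_norm x i
    have := pow_le_pow_left₀ (abs_nonneg (x i)) h0 2
    simpa [sq_abs] using this
  calc (∑ i : Fin 3, x i ^ 2) ≤ ∑ _i : Fin 3, ‖x‖ ^ 2 := Finset.sum_le_sum fun i _ => h1 i
  _ = 3 * ‖x‖ ^ 2 := by simp [Finset.sum_const, Finset.card_univ]

lemma omega_tg (m : ℝ) (hm : 0 < m) : Function.HasTemperateGrowth (omegaM m) := by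
  set f : ℝ → ℝ := fun t => Real.sqrt (t + m ^ 2) with hf_def
  set q : (Fin 3 → ℝ) → ℝ := fun k => ∑ i, k i ^ 2 with hq_def
  have hfq : omegaM m = f ∘ q := rfl
  have hq_tg : Function.HasTemperateGrowth q := q_tg
  set t : Set ℝ := Set.Ioi (-(m ^ 2 / 2)) with ht_def
  have ht_open : IsOpen t := isOpen_Ioi
  have hmem : ∀ x : Fin 3 → ℝ, q x ∈ t := by
    intro x
    have := q_nonneg x
    simp only [ht_def, Set.mem_Ioi]
    nlinarith
  have hf_smooth : ContDiffOn ℝ (⊤ : ℕ∞) f t := by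
    intro y hy
    have hy' : (0:ℝ) < y + m ^ 2 := by
      simp only [ht_def, Set.mem_Ioi] at hy; nlinarith
    exact ((Real.contDiffAt_sqrt (ne_of_gt hy')).comp y
      (contDiffAt_id.add contDiffAt_const)).contDiffWithinAt
  constructor
  · rw [hfq]
    refine contDiff_iff_contDiffAt.mpr fun x => ?_
    exact (((Real.contDiffAt_sqrt (ne_of_gt (by have := q_nonneg x; nlinarith :
        (0:ℝ) < q x + m ^ 2))).comp (q x)
      (contDiffAt_id.add contDiffAt_const)).comp x hq_tg.1.contDiffAt)
  intro n
  obtain ⟨k₀, C₀, hC₀, hqbound⟩ := hq_tg.norm_iteratedFDeriv_le_uniform n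
  -- uniform bounds on derivatives of f of order ≥ 1, on [0, ∞)
  have hb : ∀ i : ℕ, ∃ B : ℝ, 0 ≤ B ∧ ∀ y : ℝ, 0 ≤ y → 1 ≤ i → |iteratedDeriv i f y| ≤ B := by
    intro i
    rcases Nat.eq_zero_or_pos i with h0 | h1
    · exact ⟨0, le_refl _, fun y hy hi => by omega⟩
    obtain ⟨c, hc⟩ := sqrt_iteratedDeriv m hm i
    refine ⟨|c| * (m ^ 2) ^ ((1:ℝ)/2 - i), by positivity, fun y hy _ => ?_⟩
    rw [hc y (by nlinarith)]
    rw [abs_mul, abs_of_nonneg (Real.rpow_nonneg (by nlinarith) _)]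
    have hexp : (1:ℝ)/2 - i ≤ 0 := by
      have : (1:ℝ) ≤ i := by exact_mod_cast h1
      linarith
    exact mul_le_mul_of_nonneg_left
      (Real.rpow_le_rpow_of_nonpos (by positivity) (by linarith) hexp) (abs_nonneg c)
  choose b hb0 hb using hb
  set Bmax : ℝ := ∑ i ∈ Finset.range (n + 1), b i with hBmax_def
  have hBmax0 : 0 ≤ Bmax := Finset.sum_nonneg fun i _ => hb0 i
  have hBle : ∀ i ≤ n, b i ≤ Bmax := fun i hi =>
    Finset.single_le_sum (fun j _ => hb0 j) (Finset.mem_range.mpr (by omega))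
  refine ⟨1 + k₀ * n, (n.factorial : ℝ) * (Bmax + m + 3) * (1 + C₀) ^ n, fun x => ?_⟩
  set Cx : ℝ := (Bmax + m + 3) * (1 + ‖x‖) with hCx_def
  set D : ℝ := 1 + C₀ * (1 + ‖x‖) ^ k₀ with hD_def
  have hxn : (0:ℝ) ≤ ‖x‖ := norm_nonneg x
  have hone : (1:ℝ) ≤ (1 + ‖x‖) ^ k₀ := one_le_pow₀ (by linarith)
  have hD1 : (1:ℝ) ≤ D := by
    have : (0:ℝ) ≤ C₀ * (1 + ‖x‖) ^ k₀ := by positivity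
    linarith
  have hC : ∀ i, i ≤ n → ‖iteratedFDerivWithin ℝ i f t (q x)‖ ≤ Cx := by
    intro i hi
    rcases Nat.eq_zero_or_pos i with h0 | h1
    · subst h0
      rw [norm_iteratedFDerivWithin_zero]
      have hq0 := q_nonneg x
      have hq3 := q_le x
      have hsq : f (q x) ≤ m + 3 * (1 + ‖x‖) := by
        have h1 : q x + m ^ 2 ≤ (m + 3 * (1 + ‖x‖)) ^ 2 := by nlinarith
        calc f (q x) ≤ Real.sqrt ((m + 3 * (1 + ‖x‖)) ^ 2) := Real.sqrt_le_sqrt h1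
        _ = m + 3 * (1 + ‖x‖) := Real.sqrt_sq (by nlinarith)
      rw [Real.norm_eq_abs, abs_of_nonneg (Real.sqrt_nonneg _)]
      calc f (q x) ≤ m + 3 * (1 + ‖x‖) := hsq
      _ ≤ Cx := by rw [hCx_def]; nlinarith
    · rw [iteratedFDerivWithin_of_isOpen i ht_open (hmem x),
        norm_iteratedFDeriv_eq_norm_iteratedDeriv, Real.norm_eq_abs]
      calc |iteratedDeriv i f (q x)| ≤ b i := hb i (q x) (q_nonneg x) h1
      _ ≤ Bmax := hBle i hi
      _ ≤ Cx := by rw [hCx_def]; nlinarith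
  have hD : ∀ i, 1 ≤ i → i ≤ n → ‖iteratedFDerivWithin ℝ i q Set.univ x‖ ≤ D ^ i := by
    intro i h1 hi
    rw [iteratedFDerivWithin_univ]
    calc ‖iteratedFDeriv ℝ i q x‖ ≤ C₀ * (1 + ‖x‖) ^ k₀ := hqbound i hi x
    _ ≤ D := by rw [hD_def]; linarith
    _ ≤ D ^ i := le_self_pow₀ hD1 (by omega)
  have hcomp := norm_iteratedFDerivWithin_comp_le (𝕜 := ℝ) hf_smooth
    (hq_tg.1.contDiffOn) (mod_cast le_top) ht_open.uniqueDiffOn uniqueDiffOn_univ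
    (fun y _ => hmem y) (Set.mem_univ x) hC hD
  have hDpow : D ^ n ≤ (1 + C₀) ^ n * (1 + ‖x‖) ^ (k₀ * n) := by
    calc D ^ n ≤ ((1 + C₀) * (1 + ‖x‖) ^ k₀) ^ n :=
      pow_le_pow_left₀ (by positivity) (by rw [hD_def]; nlinarith) n
    _ = (1 + C₀) ^ n * (1 + ‖x‖) ^ (k₀ * n) := by rw [mul_pow, ← pow_mul]
  calc ‖iteratedFDeriv ℝ n (omegaM m) x‖
      = ‖iteratedFDerivWithin ℝ n (f ∘ q) Set.univ x‖ := by
        rw [iteratedFDerivWithin_univ, hfq]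
    _ ≤ (n.factorial : ℝ) * Cx * D ^ n := hcomp
    _ ≤ (n.factorial : ℝ) * Cx * ((1 + C₀) ^ n * (1 + ‖x‖) ^ (k₀ * n)) := by
        have h0 : (0:ℝ) ≤ (n.factorial : ℝ) * Cx := by positivity
        exact mul_le_mul_of_nonneg_left hDpow h0
    _ ≤ (n.factorial : ℝ) * (Bmax + m + 3) * (1 + C₀) ^ n * (1 + ‖x‖) ^ (1 + k₀ * n) := by
        rw [pow_add, pow_one, hCx_def]; ring_nf; rfl

noncomputable def msA (d : ℕ) : (Fin d → Fin 3 → ℝ) →L[ℝ] (Fin d → Fin 4 → ℝ) :=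
  ContinuousLinearMap.pi (fun j => (ContinuousLinearMap.pi (fun i : Fin 4 =>
    Fin.cases (0 : (Fin 3 → ℝ) →L[ℝ] ℝ) (fun i' => ContinuousLinearMap.proj i') i)).comp
    (ContinuousLinearMap.proj j))

noncomputable def msL (d : ℕ) (j : Fin d) : ℝ →L[ℝ] (Fin d → Fin 4 → ℝ) :=
  ContinuousLinearMap.pi (fun j' => ContinuousLinearMap.pi (fun i : Fin 4 =>
    if j' = j ∧ i = 0 then ContinuousLinearMap.id ℝ ℝ else 0))

lemma tg_omega_proj (d : ℕ) (m : ℝ) (hm : 0 < m) (j : Fin d) :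
    Function.HasTemperateGrowth (fun x : Fin d → Fin 3 → ℝ => omegaM m (x j)) := by
  have h := tg_comp_clm (omega_tg m hm)
    (ContinuousLinearMap.proj (R := ℝ) (φ := fun _ : Fin d => (Fin 3 → ℝ)) j)
  exact h

lemma tg_msL_omega (d : ℕ) (m : ℝ) (hm : 0 < m) (j : Fin d) :
    Function.HasTemperateGrowth (fun x : Fin d → Fin 3 → ℝ => msL d j (omegaM m (x j))) :=
  tg_clm_comp (msL d j) (tg_omega_proj d m hm j)

lemma msPhi_eq (d : ℕ) (m : ℝ) :
    (fun x : Fin d → Fin 3 → ℝ => fun j => massShell m (x j)) =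
      fun x => msA d x + ∑ j, msL d j (omegaM m (x j)) := by
  funext x j'
  funext i
  simp only [msA, msL, Pi.add_apply, Finset.sum_apply,
    ContinuousLinearMap.pi_apply, ContinuousLinearMap.comp_apply,
    ContinuousLinearMap.proj_apply, massShell]
  induction i using Fin.cases with
  | zero =>
    simp only [Fin.cons_zero, Fin.cases_zero]
    have hterm : ∀ j : Fin d, ((if j' = j ∧ True then ContinuousLinearMap.id ℝ ℝ
        else 0) : ℝ →L[ℝ] ℝ) (omegaM m (x j)) = if j' = j then omegaM m (x j) else 0 := by
      intro j; split_ifs with h1 h2 h2 <;> simp_all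
    rw [Finset.sum_congr rfl fun j _ => hterm j, Finset.sum_ite_eq]
    simp
  | succ i' =>
    simp [Fin.cons_succ, Fin.cases_succ, Fin.succ_ne_zero]

lemma msPhi_tg (d : ℕ) (m : ℝ) (hm : 0 < m) :
    Function.HasTemperateGrowth (fun x : Fin d → Fin 3 → ℝ => fun j => massShell m (x j)) := by
  rw [msPhi_eq d m]
  exact tg_add (msA d).hasTemperateGrowth
    (tg_sum Finset.univ _ (fun j _ => tg_msL_omega d m hm j))

theorem schwartz_restricted_to_mass_shell (d : ℕ) (hd : 1 ≤ d) (m : ℝ) (hm : 0 < m)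
    (F : SchwartzMap (Fin d → Fin 4 → ℝ) ℂ) :
    ∃ g : SchwartzMap (Fin d → Fin 3 → ℝ) ℂ, ∀ k : Fin d → Fin 3 → ℝ,
      g k = F (fun j => massShell m (k j)) := by
  have hΦ : Function.HasTemperateGrowth
      (fun x : Fin d → Fin 3 → ℝ => fun j => massShell m (x j)) := msPhi_tg d m hm
  have hup : ∀ x : Fin d → Fin 3 → ℝ,
      ‖x‖ ≤ (1:ℝ) * (1 + ‖fun j => massShell m (x j)‖) ^ 1 := by
    intro x
    have h1 : ‖x‖ ≤ ‖fun j => massShell m (x j)‖ := by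
      rw [pi_norm_le_iff_of_nonneg (norm_nonneg _)]
      intro j
      rw [pi_norm_le_iff_of_nonneg (norm_nonneg _)]
      intro i
      calc ‖x j i‖ = ‖massShell m (x j) i.succ‖ := by
            simp [massShell, Fin.cons_succ]
        _ ≤ ‖massShell m (x j)‖ := norm_le_pi_norm (massShell m (x j)) i.succ
        _ ≤ ‖fun j => massShell m (x j)‖ :=
            norm_le_pi_norm (fun j => massShell m (x j)) j
    have h2 : (0:ℝ) ≤ ‖fun j => massShell m (x j)‖ := norm_nonneg _
    simp only [pow_one, one_mul]
    linarith
  refine ⟨SchwartzMap.compCLM (𝕜 := ℝ) hΦ ⟨1, 1, hup⟩ F, fun k => ?_⟩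
  rw [SchwartzMap.compCLM_apply]
  rfl
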